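/- Twiddle commutation identity: for positive integers m_k, m_{k+1}, M (with M_k := m_k·m_{k+1}·M and M_{k+1} := m_{k+1}·M), one has (I_{m_k} ⊗ L^{M_{k+1}}_{m_{k+1}}) W^{M_k}_{M_{k+1}} = V_{m_k, m_{k+1}, M} (I_{m_k} ⊗ L^{M_{k+1}}_{m_{k+1}}). -/
import Mathlib


open Matrix Complex

/-- The primitive `n`-th root of unity `ω_n = exp(-2πi/n)`. -/
noncomputable def tw (n : ℕ) : ℂ := Complex.exp (-(2 * Real.pi * Complex.I) / n)

/-- The `n × n` DFT matrix `F_n = [ω_n^{kl}]`. -/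
noncomputable def DFT (n : ℕ) : Matrix (Fin n) (Fin n) ℂ :=
  fun r c => tw n ^ (r.val * c.val)

/-- The stride permutation `L^n_k` (with `n = k*m`), sending the basis vector
`e_{i,k} ⊗ e_{j,m}` (flat index `i*m+j`) to `e_{j,m} ⊗ e_{i,k}` (flat index `j*k+i`). -/
noncomputable def Lmat (n k m : ℕ) : Matrix (Fin n) (Fin n) ℂ :=
  fun r c => if r.val = (c.val % m) * k + c.val / m then 1 else 0

/-- The diagonal twiddle matrix `W^n_m` (with `n = k*m`), acting on
`e_{i,k} ⊗ e_{j,m}` (flat index `c = i*m+j`) by the scalar `ω_n^{ij}`. -/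
noncomputable def Wmat (n m : ℕ) : Matrix (Fin n) (Fin n) ℂ :=
  fun r c => if r = c then tw n ^ ((c.val / m) * (c.val % m)) else 0

/-- Entry of a `k × k` matrix at natural-number indices (0 outside range). -/
noncomputable def ment {k : ℕ} (A : Matrix (Fin k) (Fin k) ℂ) (i j : ℕ) : ℂ :=
  if h : i < k ∧ j < k then A ⟨i, h.1⟩ ⟨j, h.2⟩ else 0

/-- Kronecker product `A ⊗ B` of a `k×k` and an `m×m` matrix, written on flat
indices of size `n = k*m` (row-major: index `i*m+j ↔ e_{i,k} ⊗ e_{j,m}`). -/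
noncomputable def kron (n k m : ℕ) (A : Matrix (Fin k) (Fin k) ℂ)
    (B : Matrix (Fin m) (Fin m) ℂ) : Matrix (Fin n) (Fin n) ℂ :=
  fun r c => ment A (r.val / m) (c.val / m) * ment B (r.val % m) (c.val % m)

/-- Value of a digit list `[d_0, d_1, …]` in the mixed-radix system with radices
`[c_0, c_1, …]` (least-significant first): `d_0 + c_0*(d_1 + c_1*(…))`. -/
def mval : List ℕ → List ℕ → ℕ
  | c :: cs, d :: ds => d + c * mval cs ds
  | _, _ => 0

/-- Digits (least-significant first) of `x` in the mixed-radix system with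
radices `[c_0, c_1, …]` (least-significant first). -/
def mdig : List ℕ → ℕ → List ℕ
  | [], _ => []
  | c :: cs, x => x % c :: mdig cs (x / c)

/-- The digit-reversal permutation `P_α` of a multi-index `α = (n_K, …, n_0)`,
where `a = [n_0, …, n_K]` lists the radices of the system generated by `α`
least-significant first: `x` is decomposed in the system generated by
`α* = (n_0, …, n_K)` and re-read with reversed digits in the system of `α`. -/
def mrev (a : List ℕ) (x : ℕ) : ℕ := mval a ((mdig a.reverse x).reverse)

/-- The digit-reversal permutation matrix `S_α`, `S_α e_x = e_{P_α x}`;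
`a = [n_0, …, n_K]` lists `α = (n_K, …, n_0)` least-significant first. -/
noncomputable def Smat (n : ℕ) (a : List ℕ) : Matrix (Fin n) (Fin n) ℂ :=
  fun r c => if r.val = mrev a c.val then 1 else 0

/-- The diagonal matrix `V_{k,m,n}` of size `N = k*m*n` with
`V_{k,m,n} (e_{i,k} ⊗ e_{j,m} ⊗ e_{ℓ,n}) = ω_{kmn}^{i(ℓm+j)}`, where — as in the
factorization, where `V` acts after the stride permutation has moved the
`m`-block to the least significant position — the flat index is laid out with
blocks of sizes `k`, `n`, `m` (so `i = c/(n*m)`, `ℓ = (c/m) % n`, `j = c % m`). -/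
noncomputable def Vmat (N k m n : ℕ) : Matrix (Fin N) (Fin N) ℂ :=
  fun r c => if r = c then
    tw (k * m * n) ^ ((c.val / (m * n)) * ((c.val % m) * n + (c.val / m) % n)) else 0

/-- twiddle commutation identity. For positive `m_k, m_{k+1}, M`
with `M_k = m_k·m_{k+1}·M` and `M_{k+1} = m_{k+1}·M`:
`(I_{m_k} ⊗ L^{M_{k+1}}_{m_{k+1}}) W^{M_k}_{M_{k+1}}
  = V_{m_k, m_{k+1}, M} (I_{m_k} ⊗ L^{M_{k+1}}_{m_{k+1}})`. -/
theorem twiddle_commutation (mk mk1 M Mk Mk1 : ℕ)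
    (hmk : 0 < mk) (hmk1 : 0 < mk1) (hM : 0 < M)
    (hMk : Mk = mk * mk1 * M) (hMk1 : Mk1 = mk1 * M) :
    kron Mk mk Mk1 1 (Lmat Mk1 mk1 M) * Wmat Mk Mk1 =
      Vmat Mk mk mk1 M * kron Mk mk Mk1 1 (Lmat Mk1 mk1 M) := by
  subst hMk hMk1
  have hMk1pos : 0 < mk1 * M := Nat.mul_pos hmk1 hM
  ext r c
  rw [Matrix.mul_apply, Matrix.mul_apply,
    Finset.sum_eq_single c (fun b _ hb => by
      rw [Wmat, if_neg hb, mul_zero]) (fun hc => absurd (Finset.mem_univ c) hc),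
    Finset.sum_eq_single r (fun b _ hb => by
      rw [Vmat, if_neg (Ne.symm hb), zero_mul]) (fun hc => absurd (Finset.mem_univ r) hc)]
  rcases eq_or_ne (kron (mk * mk1 * M) mk (mk1 * M) 1 (Lmat (mk1 * M) mk1 M) r c) 0 with h | h
  · rw [h, zero_mul, mul_zero]
  · rw [Wmat, if_pos rfl, Vmat, if_pos rfl]
    have ha := left_ne_zero_of_mul (by simpa only [kron] using h)
    have hb := right_ne_zero_of_mul (by simpa only [kron] using h)
    have hrlt : r.val < mk * (mk1 * M) := by rw [← mul_assoc]; exact r.isLt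
    have hclt : c.val < mk * (mk1 * M) := by rw [← mul_assoc]; exact c.isLt
    have hrd : r.val / (mk1 * M) < mk := (Nat.div_lt_iff_lt_mul hMk1pos).mpr hrlt
    have hcd : c.val / (mk1 * M) < mk := (Nat.div_lt_iff_lt_mul hMk1pos).mpr hclt
    have hrm : r.val % (mk1 * M) < mk1 * M := Nat.mod_lt _ hMk1pos
    have hcm : c.val % (mk1 * M) < mk1 * M := Nat.mod_lt _ hMk1pos
    rw [ment, dif_pos ⟨hrd, hcd⟩] at ha
    rw [ment, dif_pos ⟨hrm, hcm⟩] at hb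
    have heq : r.val / (mk1 * M) = c.val / (mk1 * M) := by
      by_contra hne
      rw [Matrix.one_apply_ne (by simpa [Fin.ext_iff] using hne)] at ha
      exact ha rfl
    have heq2 : r.val % (mk1 * M) =
        (c.val % (mk1 * M) % M) * mk1 + c.val % (mk1 * M) / M := by
      by_contra hne
      simp only [Lmat] at hb
      rw [if_neg hne] at hb
      exact hb rfl
    rw [mul_comm]
    congr 2
    set i := c.val / (mk1 * M) with hi
    set t := c.val % (mk1 * M) with htdef
    set j := t / M with hj
    set l := t % M with hl
    have hjlt : j < mk1 := (Nat.div_lt_iff_lt_mul hM).mpr hcm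
    have hllt : l < M := Nat.mod_lt _ hM
    have hreq : r.val = mk1 * (i * M + l) + j := by
      have := Nat.div_add_mod r.val (mk1 * M)
      rw [heq, heq2] at this
      rw [← this]; ring
    have hrm1 : r.val % mk1 = j := by
      rw [hreq, Nat.mul_add_mod, Nat.mod_eq_of_lt hjlt]
    have hrd1 : r.val / mk1 = i * M + l := by
      rw [hreq, Nat.mul_add_div hmk1, Nat.div_eq_of_lt hjlt, add_zero]
    have hrdm : (i * M + l) % M = l := by
      rw [mul_comm i M, Nat.mul_add_mod, Nat.mod_eq_of_lt hllt]
    have ht : j * M + l = t := by rw [mul_comm]; exact Nat.div_add_mod t M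
    rw [heq, hrm1, hrd1, hrdm, ht]
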